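/- arXiv:math/0302231 — 2 statements merged into one kernel-verified Lean document; each statement's English description precedes it below -/
import Mathlib

section
/- Let (Ω(S),T) be a substitution dynamical system over a finite alphabet A. Then the following are equivalent: (i) there exists a letter e∈A satisfying conditions (ℓ) and (o) which occurs with bounded gaps in W(S); (ii) (Ω(S),T) is minimal; (iii) (Ω(S),T) is linearly repetitive. -/
open List Filter Topology MeasureTheory

namespace SubstLR

variable {A : Type*}

/-- Apply the substitution `S` to a finite word. -/
def subst (S : A → List A) (w : List A) : List A := w.flatMap S

/-- `iter S n w` is `S^n(w)`. -/
def iter (S : A → List A) (n : ℕ) (w : List A) : List A := (subst S)^[n] w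

/-- The set `W(S)` of finite words associated to `S`. -/
def WS (S : A → List A) : Set (List A) := {w | ∃ (a : A) (n : ℕ), w <:+: iter S n [a]}

/-- `w` is a finite factor of the two-sided infinite word `ω`. -/
def IsFactor (w : List A) (ω : ℤ → A) : Prop :=
  ∃ k : ℤ, w = (List.range w.length).map fun i => ω (k + i)

/-- The subshift `Ω(S)` associated to `S`. -/
def OmegaS (S : A → List A) : Set (ℤ → A) := {ω | ∀ w, IsFactor w ω → w ∈ WS S}

/-- The set `W(Ω(S))` of finite factors of elements of `Ω(S)`. -/
def WOmega (S : A → List A) : Set (List A) := {w | ∃ ω ∈ OmegaS S, IsFactor w ω}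

/-- Condition (ℓ): `|S^n(e)| → ∞`. -/
def CondL (S : A → List A) (e : A) : Prop :=
  Tendsto (fun n => (iter S n [e]).length) atTop atTop

/-- Condition (o): every letter occurs in some `S^n(e)`. -/
def CondO (S : A → List A) (e : A) : Prop := ∀ a : A, ∃ n : ℕ, a ∈ iter S n [e]

/-- Condition (c): `W(S) = W(Ω(S))`. -/
def CondC (S : A → List A) : Prop := WS S = WOmega S

/-- `(Ω(S),T)` is a substitution dynamical system. -/
def IsSubstSystem (S : A → List A) : Prop := (∃ e, CondL S e ∧ CondO S e) ∧ CondC S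

/-- `v` occurs with bounded gaps in the set of words `W`. -/
def BddGaps (v : List A) (W : Set (List A)) : Prop :=
  ∃ L : ℕ, 0 < L ∧ ∀ w ∈ W, L ≤ w.length → v <:+: w

/-- Condition (BG) for the letter `e`. -/
def BG (S : A → List A) (e : A) : Prop := CondL S e ∧ CondO S e ∧ BddGaps [e] (WS S)

/-- The shift by `k`; `shift 1` is the map `T`. -/
def shift (k : ℤ) (ω : ℤ → A) : ℤ → A := fun n => ω (n + k)

/-- `(Ω(S),T)` is minimal: every orbit is dense in `Ω(S)`. -/
def Minimal [TopologicalSpace A] (S : A → List A) : Prop :=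
  ∀ ω ∈ OmegaS S, OmegaS S ⊆ closure {ω' | ∃ k : ℤ, ω' = shift k ω}

/-- `(Ω(S),T)` is linearly repetitive. -/
def LinRep (S : A → List A) : Prop :=
  ∃ C : ℝ, 0 < C ∧ ∀ v ∈ WS S, ∀ w ∈ WS S, C * v.length ≤ (w.length : ℝ) → v <:+: w

/-- `(Ω(S),T)` is aperiodic. -/
def Aperiodic (S : A → List A) : Prop :=
  ∀ ω ∈ OmegaS S, ∀ k : ℤ, k ≠ 0 → shift k ω ≠ ω

/-- The set `B` of letters `a` with `limsup |S^n(a)| < ∞`. -/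
def Bset (S : A → List A) : Set A := {a | ∃ M : ℕ, ∀ n, (iter S n [a]).length ≤ M}

/-- The set `C = A ∖ B`. -/
def Cset (S : A → List A) : Set A := (Bset S)ᶜ

open Classical in
/-- `tilde S w` is the word obtained from `w` by deleting all letters of `B`. -/
noncomputable def tilde (S : A → List A) (w : List A) : List A :=
  w.filter fun x => decide (x ∈ Cset S)

/-- The induced substitution `S̃`. -/
noncomputable def tildeS (S : A → List A) : A → List A := fun x => tilde S (S x)

set_option linter.dupNamespace false

lemma singleton_infix {a : A} {w : List A} : [a] <:+: w ↔ a ∈ w := by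
  constructor
  · intro h; exact h.mem (List.mem_singleton_self a)
  · intro h
    obtain ⟨s, t, rfl⟩ := List.append_of_mem h
    exact ⟨s, t, by simp⟩

lemma iter_zero (S : A → List A) (w : List A) : iter S 0 w = w := rfl

lemma iter_succ (S : A → List A) (n : ℕ) (w : List A) :
    iter S (n + 1) w = iter S n (subst S w) := Function.iterate_succ_apply _ n w

lemma iter_succ' (S : A → List A) (n : ℕ) (w : List A) :
    iter S (n + 1) w = subst S (iter S n w) := Function.iterate_succ_apply' _ n w

lemma iter_iter (S : A → List A) (m n : ℕ) (w : List A) :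
    iter S m (iter S n w) = iter S (m + n) w := (Function.iterate_add_apply _ m n w).symm

lemma iter_flatMap (S : A → List A) (n : ℕ) (w : List A) :
    iter S n w = w.flatMap (fun a => iter S n [a]) := by
  induction n generalizing w with
  | zero => simp [iter]
  | succ n ih =>
    have h1 : ∀ v : List A, iter S (n+1) v = iter S n (subst S v) := fun v => iter_succ S n v
    rw [h1, ih (subst S w)]
    show (w.flatMap S).flatMap _ = _
    rw [List.flatMap_assoc]
    congr 1
    funext a
    rw [h1, show subst S [a] = S a from by simp [subst], ih (S a)]

lemma infix_flatMap {u v : List A} (h : u <:+: v) (f : A → List A) :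
    u.flatMap f <:+: v.flatMap f := by
  obtain ⟨s, t, rfl⟩ := h
  exact ⟨s.flatMap f, t.flatMap f, by simp⟩

lemma flatMap_infix_of_mem {a : A} {u : List A} (h : a ∈ u) (f : A → List A) :
    f a <:+: u.flatMap f := by
  obtain ⟨s, t, rfl⟩ := List.append_of_mem h
  exact ⟨s.flatMap f, t.flatMap f, by simp⟩

lemma length_flatMap_le {f : A → List A} {K : ℕ} (hK : ∀ a, (f a).length ≤ K) :
    ∀ u : List A, (u.flatMap f).length ≤ K * u.length := by
  intro u
  induction u with
  | nil => simp
  | cons a u ih =>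
    rw [List.flatMap_cons, List.length_append, List.length_cons, Nat.mul_succ]
    have := hK a
    omega

lemma countP_mul_le_sum_length {f : A → List A} {P : A → Bool} {m : ℕ}
    (h : ∀ a, P a → m ≤ (f a).length) :
    ∀ u : List A, u.countP P * m ≤ (u.flatMap f).length := by
  intro u
  induction u with
  | nil => simp
  | cons a u ih =>
    rw [List.flatMap_cons, List.length_append, List.countP_cons]
    by_cases hP : P a
    · rw [if_pos hP, Nat.add_mul, Nat.one_mul]
      have := h a hP
      omega
    · rw [if_neg hP, Nat.add_zero]
      omega

lemma WS_infix {S : A → List A} {w w' : List A} (h : w ∈ WS S) (h' : w' <:+: w) : w' ∈ WS S := by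
  obtain ⟨a, n, hn⟩ := h
  exact ⟨a, n, h'.trans hn⟩

lemma iter_mem_WS (S : A → List A) (a : A) (n : ℕ) : iter S n [a] ∈ WS S :=
  ⟨a, n, List.infix_rfl⟩

lemma prefix_span (f : A → List A) :
    ∀ (u v : List A), v <+: u.flatMap f →
      ∃ t y, t ++ y <+: u ∧ y.length ≤ 1 ∧ t.flatMap f <+: v ∧ v <+: (t ++ y).flatMap f := by
  intro u
  induction u with
  | nil =>
    intro v hv
    rw [List.flatMap_nil, List.prefix_nil] at hv
    exact ⟨[], [], by simp, by simp, by simp [hv], by simp [hv]⟩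
  | cons b u ih =>
    intro v hv
    rw [List.flatMap_cons] at hv
    by_cases hlen : v.length ≤ (f b).length
    · refine ⟨[], [b], ⟨u, rfl⟩, by simp, by simp, ?_⟩
      have h1 : v <+: f b :=
        List.prefix_of_prefix_length_le hv (List.prefix_append _ _) hlen
      simpa using h1
    · push_neg at hlen
      have hfb : f b <+: v :=
        List.prefix_of_prefix_length_le (List.prefix_append _ _) hv (le_of_lt hlen)
      obtain ⟨v', rfl⟩ := hfb
      have hv' : v' <+: u.flatMap f := (List.prefix_append_right_inj (f b)).mp hv
      obtain ⟨t, y, hty, hy, ht, hvy⟩ := ih v' hv'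
      refine ⟨b :: t, y, ?_, hy, ?_, ?_⟩
      · rw [List.cons_append, List.cons_prefix_cons]
        exact ⟨rfl, hty⟩
      · rw [List.flatMap_cons]
        exact (List.prefix_append_right_inj (f b)).mpr ht
      · rw [List.cons_append, List.flatMap_cons]
        exact (List.prefix_append_right_inj (f b)).mpr hvy

lemma infix_span (f : A → List A) :
    ∀ (u v : List A), v <:+: u.flatMap f →
      ∃ x t y, x ++ t ++ y <:+: u ∧ x.length ≤ 1 ∧ y.length ≤ 1 ∧
        t.flatMap f <:+: v ∧ v <:+: (x ++ t ++ y).flatMap f := by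
  intro u
  induction u with
  | nil =>
    intro v hv
    rw [List.flatMap_nil] at hv
    have : v = [] := List.eq_nil_of_infix_nil hv
    exact ⟨[], [], [], by simp, by simp, by simp, by simp [this], by simp [this]⟩
  | cons b u ih =>
    intro v hv
    obtain ⟨pre, post, hsplit⟩ := hv
    rw [List.flatMap_cons] at hsplit
    have hwhole : pre ++ (v ++ post) = f b ++ u.flatMap f := by
      rw [← List.append_assoc]; exact hsplit
    by_cases hp : (f b).length ≤ pre.length
    · -- v is an infix of u.flatMap f
      have hpre : f b <+: pre :=
        List.prefix_of_prefix_length_le (List.prefix_append _ _) ⟨v ++ post, hwhole⟩ hp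
      obtain ⟨pre', rfl⟩ := hpre
      have hv2 : v <:+: u.flatMap f := by
        refine ⟨pre', post, ?_⟩
        apply List.append_cancel_left (as := f b)
        rw [← hsplit]
        simp [List.append_assoc]
      obtain ⟨x, t, y, h1, h2, h3, h4, h5⟩ := ih v hv2
      exact ⟨x, t, y, h1.trans ⟨[b], [], by simp⟩, h2, h3, h4, h5⟩
    · push_neg at hp
      have hpre : pre <+: f b :=
        List.prefix_of_prefix_length_le ⟨v ++ post, hwhole⟩ (List.prefix_append _ _)
          (le_of_lt hp)
      obtain ⟨d, hd⟩ := hpre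
      have hvp : v ++ post = d ++ u.flatMap f := by
        apply List.append_cancel_left (as := pre)
        rw [hwhole, ← List.append_assoc, hd]
      by_cases hv2 : v.length ≤ d.length
      · -- v inside the block f b
        have hvd : v <+: d :=
          List.prefix_of_prefix_length_le ⟨post, hvp⟩ (List.prefix_append _ _) hv2
        refine ⟨[b], [], [], ⟨[], u, by simp⟩, by simp, by simp, by simp, ?_⟩
        obtain ⟨r, hr⟩ := hvd
        refine ⟨pre, r, ?_⟩
        simp only [List.append_nil, List.flatMap_cons, List.flatMap_nil]
        rw [← hd, ← hr]
        simp
      · push_neg at hv2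
        have hdv : d <+: v :=
          List.prefix_of_prefix_length_le (List.prefix_append _ _) ⟨post, hvp⟩
            (le_of_lt hv2)
        obtain ⟨v₂, rfl⟩ := hdv
        have hv₂ : v₂ <+: u.flatMap f := by
          refine ⟨post, ?_⟩
          have h9 := hvp
          rw [List.append_assoc] at h9
          exact List.append_cancel_left h9
        obtain ⟨t, y, hty, hy, ht, hvy⟩ := prefix_span f u v₂ hv₂
        refine ⟨[b], t, y, ?_, by simp, hy, ?_, ?_⟩
        · obtain ⟨r, hr⟩ := hty
          exact ⟨[], r, by simp [← hr]⟩
        · exact ht.isInfix.trans ⟨d, [], by simp⟩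
        · obtain ⟨z, hz⟩ := hvy
          rw [List.flatMap_append] at hz
          refine ⟨pre, z, ?_⟩
          simp only [List.flatMap_append, List.flatMap_cons, List.flatMap_nil,
            List.nil_append, List.append_nil]
          simp only [List.append_assoc]
          rw [hz, ← hd, List.append_assoc]

lemma infix_span' {f : A → List A} {K : ℕ} (hK : ∀ a, (f a).length ≤ K)
    {u v : List A} (h : v <:+: u.flatMap f) :
    ∃ t, t <:+: u ∧ t.flatMap f <:+: v ∧ v.length ≤ K * (t.length + 2) := by
  obtain ⟨x, t, y, h1, hx, hy, h4, h5⟩ := infix_span f u v h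
  refine ⟨t, (List.infix_append _ _ _ : t <:+: x ++ t ++ y).trans h1, h4, ?_⟩
  calc v.length ≤ ((x ++ t ++ y).flatMap f).length := h5.length_le
    _ ≤ K * (x ++ t ++ y).length := length_flatMap_le hK _
    _ ≤ K * (t.length + 2) := by
        rw [List.length_append, List.length_append]
        exact Nat.mul_le_mul_left _ (by omega)

theorem bg_linrep [Fintype A] (S : A → List A) (e : A) (hL : CondL S e) (hO : CondO S e)
    (hBG : BddGaps [e] (WS S)) : LinRep S := by
  classical
  obtain ⟨L₀, hL₀pos, hgap⟩ := hBG
  -- `ℓ n` is the length of `S^n(e)`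
  set ℓ : ℕ → ℕ := fun n => (iter S n [e]).length with hℓdef
  have hE : ∀ w ∈ WS S, L₀ ≤ w.length → e ∈ w := fun w hw hlen =>
    singleton_infix.mp (hgap w hw hlen)
  -- K₁
  set K₁ : ℕ := Finset.univ.sup (fun a : A => (S a).length) with hK₁def
  have hK₁ : ∀ a : A, (S a).length ≤ K₁ := fun a =>
    Finset.le_sup (f := fun a : A => (S a).length) (Finset.mem_univ a)
  have hℓ0 : ℓ 0 = 1 := rfl
  -- submultiplicativity
  have hsub : ∀ a b : ℕ, ℓ (a + b) ≤ K₁ ^ b * ℓ a := by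
    intro a b
    induction b with
    | zero => simp
    | succ b ih =>
      have h1 : ℓ (a + b + 1) ≤ K₁ * ℓ (a + b) := by
        show (iter S (a + b + 1) [e]).length ≤ _
        rw [iter_succ']
        exact length_flatMap_le hK₁ _
      calc ℓ (a + (b+1)) = ℓ (a + b + 1) := by ring_nf
        _ ≤ K₁ * ℓ (a + b) := h1
        _ ≤ K₁ * (K₁ ^ b * ℓ a) := Nat.mul_le_mul_left _ ih
        _ = K₁ ^ (b+1) * ℓ a := by ring
  have hK₁1 : 1 ≤ K₁ := by
    by_contra h
    push_neg at h
    obtain ⟨n, hn2, hn1⟩ := ((hL.eventually_ge_atTop 2).and (eventually_ge_atTop 1)).exists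
    have hn2' : 2 ≤ ℓ n := hn2
    have h2 := hsub 0 n
    rw [Nat.zero_add] at h2
    have h0 : K₁ ^ n = 0 := by
      have hz : K₁ = 0 := by omega
      rw [hz, Nat.zero_pow (by omega)]
    rw [h0] at h2
    omega
  -- the jump step j
  obtain ⟨j, hjge, -⟩ := ((hL.eventually_ge_atTop (max L₀ 2)).and (eventually_ge_atTop 1)).exists
  have hje : e ∈ iter S j [e] :=
    hE _ (iter_mem_WS S e j) (le_trans (le_max_left _ _) hjge)
  have hj1 : 1 ≤ j := by
    rcases Nat.eq_zero_or_pos j with h | h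
    · exfalso
      have h2 : max L₀ 2 ≤ ℓ j := hjge
      rw [h, hℓ0] at h2
      have := le_max_right L₀ 2
      omega
    · exact h
  -- bump: iter S N [e] is an infix of iter S (N + q*j) [e]
  have hbump1 : ∀ N : ℕ, iter S N [e] <:+: iter S (N + j) [e] := by
    intro N
    have h1 : iter S N [e] <:+: iter S N (iter S j [e]) := by
      rw [iter_flatMap S N (iter S j [e])]
      exact flatMap_infix_of_mem hje (fun a => iter S N [a])
    rwa [iter_iter] at h1
  have hbump : ∀ N q : ℕ, iter S N [e] <:+: iter S (N + q * j) [e] := by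
    intro N q
    induction q with
    | zero => simp
    | succ q ih =>
      have := hbump1 (N + q * j)
      rw [Nat.succ_mul, ← Nat.add_assoc]
      exact ih.trans this
  have hjump : ∀ a q : ℕ, ℓ a ≤ ℓ (a + q * j) := fun a q => (hbump a q).length_le
  -- monotone envelope
  set E : ℕ := K₁ ^ j with hEdef
  have hE1 : 1 ≤ E := Nat.one_le_pow _ _ (by omega)
  have henv : ∀ a b : ℕ, a ≤ b → ℓ a ≤ E * ℓ b := by
    intro a b hab
    rcases Nat.eq_or_lt_of_le hab with rfl | hlt
    · calc ℓ a ≤ 1 * ℓ a := by omega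
        _ ≤ E * ℓ a := Nat.mul_le_mul_right _ hE1
    · -- choose q with b < a + q*j ≤ b + j
      obtain ⟨q, s, hs1, hs2, hqs⟩ : ∃ q s : ℕ, 1 ≤ s ∧ s ≤ j ∧ a + q * j = b + s := by
        have hdm := Nat.div_add_mod (b - a) j
        have hmlt : (b - a) % j < j := Nat.mod_lt _ (by omega)
        refine ⟨(b - a) / j + 1, j - (b - a) % j, by omega, by omega, ?_⟩
        have h9 : ((b - a) / j + 1) * j = j * ((b - a) / j) + j := by ring
        rw [h9]
        omega
      calc ℓ a ≤ ℓ (a + q * j) := hjump a q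
        _ = ℓ (b + s) := by rw [hqs]
        _ ≤ K₁ ^ s * ℓ b := hsub b s
        _ ≤ E * ℓ b := Nat.mul_le_mul_right _ (Nat.pow_le_pow_right hK₁1 hs2)
  -- occurrence of every WS word in high iterates on e
  have hocc : ∀ v ∈ WS S, ∀ k : ℕ, ∃ N : ℕ, k ≤ N ∧ v <:+: iter S N [e] := by
    intro v hv k
    obtain ⟨a, n, hn⟩ := hv
    obtain ⟨ka, hka⟩ := hO a
    have h1 : iter S n [a] <:+: iter S (n + ka) [e] := by
      have h2 : iter S n [a] <:+: iter S n (iter S ka [e]) := by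
        rw [iter_flatMap S n (iter S ka [e])]
        exact flatMap_infix_of_mem hka (fun b => iter S n [b])
      rwa [iter_iter] at h2
    refine ⟨n + ka + k * j, ?_, ?_⟩
    · have : k ≤ k * j := Nat.le_mul_of_pos_right k (by omega)
      omega
    · exact (hn.trans h1).trans (hbump (n + ka) k)
  -- per-word bounded gaps
  have hzgap : ∀ z ∈ WS S, ∃ G : ℕ, ∀ w ∈ WS S, G ≤ w.length → z <:+: w := by
    intro z hz
    by_cases hznil : z = []
    · exact ⟨0, fun w _ _ => by simp [hznil]⟩
    obtain ⟨k, -, hzk⟩ := hocc z hz 0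
    set Kk : ℕ := Finset.univ.sup (fun a : A => (iter S k [a]).length) with hKkdef
    have hKk : ∀ a : A, (iter S k [a]).length ≤ Kk := fun a =>
      Finset.le_sup (f := fun a : A => (iter S k [a]).length) (Finset.mem_univ a)
    have hKk1 : 1 ≤ Kk := by
      have h0 : 1 ≤ z.length := List.length_pos_iff.mpr hznil
      have h1 : z.length ≤ (iter S k [e]).length := hzk.length_le
      have h2 := hKk e
      omega
    refine ⟨Kk * (L₀ + 2) + 1, ?_⟩
    intro w hw hwlen
    obtain ⟨M, hMk, hwM⟩ := hocc w hw k
    have hrep : iter S M [e] = (iter S (M - k) [e]).flatMap (fun a => iter S k [a]) := by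
      rw [← iter_flatMap, iter_iter]
      congr 1
      omega
    rw [hrep] at hwM
    obtain ⟨t, htu, htw, hlen2⟩ := infix_span' hKk hwM
    have htWS : t ∈ WS S := WS_infix (iter_mem_WS S e (M - k)) htu
    have htL : L₀ ≤ t.length := by
      by_contra hc
      push_neg at hc
      have h5 : Kk * (t.length + 2) ≤ Kk * (L₀ + 2) := Nat.mul_le_mul_left _ (by omega)
      omega
    have het : e ∈ t := hE t htWS htL
    have h6 : iter S k [e] <:+: t.flatMap (fun a => iter S k [a]) :=
      flatMap_infix_of_mem het (fun a => iter S k [a])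
    exact (hzk.trans h6).trans htw
  -- uniform bounded gaps for words of bounded length
  have hGapAll : ∀ Λ : ℕ, ∃ G : ℕ, ∀ z ∈ WS S, z.length ≤ Λ →
      ∀ w ∈ WS S, G ≤ w.length → z <:+: w := by
    intro Λ
    have hfin : {z : List A | z.length ≤ Λ}.Finite := List.finite_length_le A Λ
    refine ⟨hfin.toFinset.sup (fun z => if h : z ∈ WS S then (hzgap z h).choose else 0), ?_⟩
    intro z hz hzΛ w hw hwlen
    have hmem : z ∈ hfin.toFinset := hfin.mem_toFinset.mpr hzΛ
    have hle := Finset.le_sup (f := fun z => if h : z ∈ WS S then (hzgap z h).choose else 0) hmem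
    simp only [dif_pos hz] at hle
    exact (hzgap z hz).choose_spec w hw (by omega)
  -- unbounded letters reach e
  have hCe : ∀ c ∈ Cset S, ∃ k : ℕ, e ∈ iter S k [c] := by
    intro c hc
    rw [Cset, Set.mem_compl_iff, Bset, Set.mem_setOf_eq] at hc
    push_neg at hc
    obtain ⟨n, hn⟩ := hc L₀
    exact ⟨n, hE _ (iter_mem_WS S c n) (le_of_lt hn)⟩
  set nc : A → ℕ := fun c => if h : c ∈ Cset S then (hCe c h).choose else 0 with hncdef
  set N₀ : ℕ := Finset.univ.sup nc with hN₀def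
  have hnc : ∀ c ∈ Cset S, e ∈ iter S (nc c) [c] := by
    intro c hc
    simp only [hncdef]
    rw [dif_pos hc]
    exact (hCe c hc).choose_spec
  have hncN₀ : ∀ c : A, nc c ≤ N₀ := fun c => Finset.le_sup (Finset.mem_univ c)
  -- lower bound on blocks of unbounded letters
  have hlow : ∀ c ∈ Cset S, ∀ n : ℕ, N₀ ≤ n → ℓ (n - N₀) ≤ E * (iter S n [c]).length := by
    intro c hc n hn
    have h1 : iter S (n - nc c) [e] <:+: iter S n [c] := by
      have h2 : iter S (n - nc c) [e] <:+: iter S (n - nc c) (iter S (nc c) [c]) := by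
        rw [iter_flatMap S (n - nc c) (iter S (nc c) [c])]
        exact flatMap_infix_of_mem (hnc c hc) (fun b => iter S (n - nc c) [b])
      rw [iter_iter] at h2
      have h3 : n - nc c + nc c = n := by have := hncN₀ c; omega
      rwa [h3] at h2
    calc ℓ (n - N₀) ≤ E * ℓ (n - nc c) := henv _ _ (by have := hncN₀ c; omega)
      _ ≤ E * (iter S n [c]).length := Nat.mul_le_mul_left _ h1.length_le
  -- upper bound on all blocks
  set ka : A → ℕ := fun a => (hO a).choose with hkadef
  have hka : ∀ a : A, a ∈ iter S (ka a) [e] := fun a => (hO a).choose_spec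
  set p : ℕ := Finset.univ.sup ka with hpdef
  have hkap : ∀ a : A, ka a ≤ p := fun a => Finset.le_sup (Finset.mem_univ a)
  have hupp : ∀ (n : ℕ) (a : A), (iter S n [a]).length ≤ E * ℓ (n + p) := by
    intro n a
    have h1 : iter S n [a] <:+: iter S (n + ka a) [e] := by
      have h2 : iter S n [a] <:+: iter S n (iter S (ka a) [e]) := by
        rw [iter_flatMap S n (iter S (ka a) [e])]
        exact flatMap_infix_of_mem (hka a) (fun b => iter S n [b])
      rwa [iter_iter] at h2
    calc (iter S n [a]).length ≤ ℓ (n + ka a) := h1.length_le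
      _ ≤ E * ℓ (n + p) := henv _ _ (by have := hkap a; omega)
  -- e is an unbounded letter
  have heC : e ∈ Cset S := by
    rw [Cset, Set.mem_compl_iff, Bset, Set.mem_setOf_eq]
    push_neg
    intro M
    obtain ⟨n, hn⟩ := (hL.eventually_ge_atTop (M + 1)).exists
    exact ⟨n, by omega⟩
  -- run-length bound
  have hrun : ∀ m : ℕ, ∀ t ∈ WS S, t.length ≤ m →
      t.length ≤ (t.countP (fun x => decide (x ∈ Cset S)) + 1) * L₀ := by
    intro m
    induction m with
    | zero =>
      intro t ht hlen
      have h1 : 1 * L₀ ≤ (t.countP (fun x => decide (x ∈ Cset S)) + 1) * L₀ :=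
        Nat.mul_le_mul_right _ (by omega)
      omega
    | succ m ih =>
      intro t ht hlen
      by_cases hsmall : t.length < L₀
      · have h1 : 1 * L₀ ≤ (t.countP (fun x => decide (x ∈ Cset S)) + 1) * L₀ :=
          Nat.mul_le_mul_right _ (by omega)
        omega
      · push_neg at hsmall
        have htd : t.take L₀ ++ t.drop L₀ = t := t.take_append_drop L₀
        have ht₁ : t.take L₀ ∈ WS S := WS_infix ht (List.take_prefix L₀ t).isInfix
        have hlen₁ : (t.take L₀).length = L₀ := by rw [List.length_take]; omega
        have he₁ : e ∈ t.take L₀ := hE _ ht₁ (by omega)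
        have hc₁ : 1 ≤ (t.take L₀).countP (fun x => decide (x ∈ Cset S)) := by
          apply List.countP_pos_iff.mpr
          exact ⟨e, he₁, decide_eq_true heC⟩
        have ht₂ : t.drop L₀ ∈ WS S := WS_infix ht (List.drop_suffix L₀ t).isInfix
        have hlen₂ : (t.drop L₀).length = t.length - L₀ := List.length_drop
        have ih₂ := ih (t.drop L₀) ht₂ (by omega)
        have hcnt : t.countP (fun x => decide (x ∈ Cset S)) =
            (t.take L₀).countP (fun x => decide (x ∈ Cset S)) +
            (t.drop L₀).countP (fun x => decide (x ∈ Cset S)) := by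
          conv_lhs => rw [← htd]
          rw [List.countP_append]
        have hfin : ((t.drop L₀).countP (fun x => decide (x ∈ Cset S)) + 2) * L₀ ≤
            (t.countP (fun x => decide (x ∈ Cset S)) + 1) * L₀ :=
          Nat.mul_le_mul_right _ (by omega)
        have hexp : ((t.drop L₀).countP (fun x => decide (x ∈ Cset S)) + 2) * L₀ =
            ((t.drop L₀).countP (fun x => decide (x ∈ Cset S)) + 1) * L₀ + L₀ := by ring
        omega
  -- main construction
  obtain ⟨G, hG⟩ := hGapAll (2 * L₀ + 2)
  set D : ℕ := E * E * K₁ ^ (N₀ + p + 1) with hDdef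
  have hD1 : 1 ≤ D := by
    have h1 : 1 ≤ K₁ ^ (N₀ + p + 1) := Nat.one_le_pow _ _ (by omega)
    calc (1:ℕ) = 1 * 1 * 1 := rfl
      _ ≤ E * E * K₁ ^ (N₀ + p + 1) := Nat.mul_le_mul (Nat.mul_le_mul hE1 hE1) h1
  refine ⟨(((G + 2) * D : ℕ) : ℝ), by positivity, ?_⟩
  intro v hv w hw hlen
  by_cases hvnil : v = []
  · rw [hvnil]; exact List.nil_infix
  have hm1 : 1 ≤ v.length := List.length_pos_iff.mpr hvnil
  set m := v.length with hmdef
  -- choose the scale n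
  have hPex : ∃ n : ℕ, N₀ + 1 ≤ n ∧ E * m ≤ ℓ (n - N₀) := by
    obtain ⟨K₀, hK₀⟩ := eventually_atTop.mp (hL.eventually_ge_atTop (E * m))
    refine ⟨K₀ + N₀ + 1, by omega, ?_⟩
    have : K₀ + N₀ + 1 - N₀ = K₀ + 1 := by omega
    rw [this]
    exact hK₀ _ (by omega)
  obtain ⟨n, hn1, hn2, hmin⟩ : ∃ n : ℕ, N₀ + 1 ≤ n ∧ E * m ≤ ℓ (n - N₀) ∧
      ℓ (n - 1 - N₀) ≤ E * m := by
    refine ⟨Nat.find hPex, (Nat.find_spec hPex).1, (Nat.find_spec hPex).2, ?_⟩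
    rcases Nat.eq_or_lt_of_le (Nat.find_spec hPex).1 with heq | hlt
    · have h0 : Nat.find hPex - 1 - N₀ = 0 := by omega
      rw [h0, hℓ0]
      calc (1:ℕ) = 1 * 1 := rfl
        _ ≤ E * m := Nat.mul_le_mul hE1 hm1
    · have hnot := Nat.find_min hPex (m := Nat.find hPex - 1) (by omega)
      push_neg at hnot
      have h9 := hnot (by omega)
      omega
  -- block length bounds at scale n
  have hKnbound : ∀ a : A, (iter S n [a]).length ≤ D * m := by
    intro a
    have h2 : ℓ (n + p) ≤ K₁ ^ (N₀ + p + 1) * ℓ (n - 1 - N₀) := by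
      have h3 : n + p = (n - 1 - N₀) + (N₀ + p + 1) := by omega
      rw [h3]
      exact hsub _ _
    calc (iter S n [a]).length ≤ E * ℓ (n + p) := hupp n a
      _ ≤ E * (K₁ ^ (N₀ + p + 1) * ℓ (n - 1 - N₀)) := Nat.mul_le_mul_left _ h2
      _ ≤ E * (K₁ ^ (N₀ + p + 1) * (E * m)) :=
          Nat.mul_le_mul_left _ (Nat.mul_le_mul_left _ hmin)
      _ = D * m := by rw [hDdef]; ring
  have hblock : ∀ c ∈ Cset S, m ≤ (iter S n [c]).length := by
    intro c hc
    have h1 := hlow c hc n (by omega)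
    exact Nat.le_of_mul_le_mul_left (le_trans hn2 h1) (by omega)
  -- extract the short spanning word
  obtain ⟨N, hNn, hvN⟩ := hocc v hv n
  have hrepN : iter S N [e] = (iter S (N - n) [e]).flatMap (fun a => iter S n [a]) := by
    rw [← iter_flatMap, iter_iter]
    congr 1
    omega
  rw [hrepN] at hvN
  obtain ⟨x, t, y, hxty, hx1, hy1, htv, hvxty⟩ := infix_span (fun a => iter S n [a]) _ _ hvN
  have htWS : t ∈ WS S := WS_infix (iter_mem_WS S e (N - n))
    ((List.infix_append _ _ _).trans hxty)
  have hcnt1 : t.countP (fun x => decide (x ∈ Cset S)) ≤ 1 := by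
    by_contra hc
    push_neg at hc
    have h1 : t.countP (fun x => decide (x ∈ Cset S)) * m ≤
        (t.flatMap (fun a => iter S n [a])).length := by
      apply countP_mul_le_sum_length
      intro a ha
      exact hblock a (of_decide_eq_true ha)
    have h2 : (t.flatMap (fun a => iter S n [a])).length ≤ m := htv.length_le
    have h3 : 2 * m ≤ t.countP (fun x => decide (x ∈ Cset S)) * m :=
      Nat.mul_le_mul_right _ (by omega)
    omega
  have htlen : t.length ≤ 2 * L₀ :=
    calc t.length ≤ (t.countP (fun x => decide (x ∈ Cset S)) + 1) * L₀ :=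
          hrun t.length t htWS le_rfl
      _ ≤ 2 * L₀ := Nat.mul_le_mul_right _ (by omega)
  have hu''WS : x ++ t ++ y ∈ WS S := WS_infix (iter_mem_WS S e (N - n)) hxty
  have hu''len : (x ++ t ++ y).length ≤ 2 * L₀ + 2 := by
    rw [List.length_append, List.length_append]
    omega
  -- decompose the long word w
  obtain ⟨M, hMn, hwM⟩ := hocc w hw n
  have hrepM : iter S M [e] = (iter S (M - n) [e]).flatMap (fun a => iter S n [a]) := by
    rw [← iter_flatMap, iter_iter]
    congr 1
    omega
  rw [hrepM] at hwM
  obtain ⟨tw, htwu, htww, hwlen2⟩ := infix_span' (fun a => hKnbound a) hwM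
  have htwWS : tw ∈ WS S := WS_infix (iter_mem_WS S e (M - n)) htwu
  have hwn : (G + 2) * (D * m) ≤ w.length := by
    have h1 : (((G + 2) * D : ℕ) : ℝ) * (m : ℝ) ≤ (w.length : ℝ) := hlen
    have h2 : (((G + 2) * (D * m) : ℕ) : ℝ) ≤ (w.length : ℝ) := by
      push_cast at h1 ⊢
      linarith
    exact_mod_cast h2
  have hDm1 : 1 ≤ D * m := by
    calc (1:ℕ) = 1 * 1 := rfl
      _ ≤ D * m := Nat.mul_le_mul hD1 hm1
  have htwG : G ≤ tw.length := by
    have h1 : (G + 2) * (D * m) ≤ (D * m) * (tw.length + 2) := le_trans hwn hwlen2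
    rw [Nat.mul_comm (G + 2)] at h1
    have h2 := Nat.le_of_mul_le_mul_left h1 (by omega)
    omega
  have hfit : x ++ t ++ y <:+: tw := hG _ hu''WS hu''len tw htwWS htwG
  exact hvxty.trans ((infix_flatMap hfit _).trans htww)

lemma infix_map_range {g : ℕ → A} {L : ℕ} {v : List A}
    (h : v <:+: (List.range L).map g) :
    ∃ r : ℕ, r + v.length ≤ L ∧ v = (List.range v.length).map (fun i => g (r + i)) := by
  obtain ⟨s, t, hst⟩ := h
  have hst' : s ++ (v ++ t) = (List.range L).map g := by rw [← List.append_assoc]; exact hst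
  have hlen : s.length + (v.length + t.length) = L := by
    have h1 := congrArg List.length hst'
    simpa using h1
  refine ⟨s.length, by omega, ?_⟩
  have key : ∀ i, i < v.length → v[i]? = some (g (s.length + i)) := by
    intro i hi
    have e2 : (s ++ (v ++ t))[s.length + i]? = (v ++ t)[s.length + i - s.length]? :=
      List.getElem?_append_right (by omega)
    rw [Nat.add_sub_cancel_left, hst'] at e2
    have e3 : (v ++ t)[i]? = v[i]? := List.getElem?_append_left hi
    calc v[i]? = (v ++ t)[i]? := e3.symm
      _ = ((List.range L).map g)[s.length + i]? := e2.symm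
      _ = some (g (s.length + i)) := by
          rw [List.getElem?_map, List.getElem?_range (show s.length + i < L by omega)]
          rfl
  apply List.ext_getElem?
  intro i
  by_cases hi : i < v.length
  · rw [key i hi, List.getElem?_map, List.getElem?_range hi]
    rfl
  · push_neg at hi
    rw [List.getElem?_eq_none (by omega), List.getElem?_eq_none (by simpa using hi)]

theorem linrep_minimal [TopologicalSpace A] (S : A → List A) (h : LinRep S) : Minimal S := by
  obtain ⟨C, hC, hrep⟩ := h
  intro ω hω ω' hω'
  have key : ∀ N : ℕ, ∃ k : ℤ, ∀ n : ℤ, |n| ≤ (N : ℤ) → shift k ω n = ω' n := by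
    intro N
    set v : List A := (List.range (2 * N + 1)).map (fun i => ω' (-(N : ℤ) + i)) with hvdef
    have hv' : v = (List.range (2 * N + 1)).map (fun i : ℕ => ω' (-(N : ℤ) + i)) := by
      rw [hvdef]
      simp [← List.map_eq_flatMap, List.map_map, Function.comp_def]
    have hvlen : v.length = 2 * N + 1 := by rw [hv']; simp
    have hvWS : v ∈ WS S := hω' v ⟨-(N : ℤ), by rw [hvlen]⟩
    set M : ℕ := ⌈C * (2 * (N : ℝ) + 1)⌉₊ + 1 with hMdef
    set wM : List A := (List.range M).map (fun i => ω ((0 : ℤ) + i)) with hwMdef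
    have hw' : wM = (List.range M).map (fun i : ℕ => ω ((0 : ℤ) + i)) := by
      rw [hwMdef]
      simp [← List.map_eq_flatMap, List.map_map, Function.comp_def]
    have hwlen : wM.length = M := by rw [hw']; simp
    have hwWS : wM ∈ WS S := hω wM ⟨(0 : ℤ), by rw [hwlen]⟩
    have hvwM : v <:+: wM := by
      apply hrep v hvWS wM hwWS
      rw [hwlen, hvlen, hMdef]
      push_cast
      have h9 := Nat.le_ceil (C * (2 * (N : ℝ) + 1))
      linarith
    rw [hw'] at hvwM
    obtain ⟨r, hrle, hform⟩ := infix_map_range hvwM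
    refine ⟨(r : ℤ) + N, ?_⟩
    intro n hn
    have hn' : -(N : ℤ) ≤ n ∧ n ≤ N := abs_le.mp hn
    have hi0 : (0 : ℤ) ≤ n + N := by omega
    set i : ℕ := (n + N).toNat with hidef
    have hiv : i < v.length := by
      rw [hvlen]
      omega
    have h1 : v[i]? = some (ω' (-(N : ℤ) + (i : ℤ))) := by
      rw [hv', List.getElem?_map, List.getElem?_range (by omega : i < 2 * N + 1)]
      rfl
    have h2 : v[i]? = some (ω ((0 : ℤ) + ((r + i : ℕ) : ℤ))) := by
      conv_lhs => rw [hform]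
      rw [List.getElem?_map, List.getElem?_range hiv]
      rfl
    have heq : ω' (-(N : ℤ) + (i : ℤ)) = ω ((0 : ℤ) + ((r + i : ℕ) : ℤ)) :=
      Option.some.inj (h1.symm.trans h2)
    have hiZ : (i : ℤ) = n + N := Int.toNat_of_nonneg hi0
    have h4 : (-(N : ℤ) + (i : ℤ)) = n := by rw [hiZ]; ring
    have h5 : ((0 : ℤ) + ((r + i : ℕ) : ℤ)) = n + ((r : ℤ) + N) := by
      push_cast
      rw [hiZ]
      ring
    show ω (n + ((r : ℤ) + N)) = ω' n
    calc ω (n + ((r : ℤ) + N)) = ω ((0 : ℤ) + ((r + i : ℕ) : ℤ)) := by rw [h5]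
      _ = ω' (-(N : ℤ) + (i : ℤ)) := heq.symm
      _ = ω' n := by rw [h4]
  choose k hk using key
  have htend : Tendsto (fun N => shift (k N) ω) atTop (𝓝 ω') := by
    rw [tendsto_pi_nhds]
    intro n
    have heq : (fun N => shift (k N) ω n) =ᶠ[atTop] (fun _ => ω' n) := by
      filter_upwards [eventually_ge_atTop n.natAbs] with N hN
      apply hk N n
      rw [Int.abs_eq_natAbs]
      exact_mod_cast hN
    exact Tendsto.congr' heq.symm tendsto_const_nhds
  exact mem_closure_of_tendsto htend (Filter.Eventually.of_forall fun N => ⟨k N, rfl⟩)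

lemma coe_map_range (g : ℤ → A) (L : ℕ) :
    List.map (fun i : ℤ => g i) (List.range L) = (List.range L).map (fun i : ℕ => g i) := by
  simp [← List.map_eq_flatMap, List.map_map, Function.comp_def]

lemma isFactor_iff {w : List A} {ω : ℤ → A} :
    IsFactor w ω ↔ ∃ k : ℤ, w = (List.range w.length).map (fun i : ℕ => ω (k + (i : ℤ))) := by
  constructor
  · rintro ⟨k, hk⟩
    exact ⟨k, hk.trans (coe_map_range (fun i => ω (k + i)) w.length)⟩
  · rintro ⟨k, hk⟩
    exact ⟨k, hk.trans (coe_map_range (fun i => ω (k + i)) w.length).symm⟩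

lemma shift_mem_OmegaS {S : A → List A} {ω : ℤ → A} (h : ω ∈ OmegaS S) (k : ℤ) :
    shift k ω ∈ OmegaS S := by
  intro w hw
  obtain ⟨k', hk'⟩ := isFactor_iff.mp hw
  refine h w (isFactor_iff.mpr ⟨k' + k, ?_⟩)
  conv_lhs => rw [hk']
  apply List.map_congr_left
  intro i _
  show ω (k' + i + k) = ω (k' + k + i)
  congr 1
  ring

lemma isClosed_OmegaS [TopologicalSpace A] [DiscreteTopology A] (S : A → List A) :
    IsClosed (OmegaS S) := by
  rw [← isOpen_compl_iff, isOpen_iff_forall_mem_open]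
  intro ω hω
  rw [Set.mem_compl_iff, OmegaS, Set.mem_setOf_eq] at hω
  push_neg at hω
  obtain ⟨w, hfac, hnot⟩ := hω
  obtain ⟨k, hk⟩ := isFactor_iff.mp hfac
  refine ⟨{ω' : ℤ → A | ∀ i : ℕ, i < w.length → ω' (k + i) = ω (k + i)}, ?_, ?_, ?_⟩
  · intro ω' hω'
    rw [Set.mem_compl_iff, OmegaS, Set.mem_setOf_eq]
    push_neg
    refine ⟨w, isFactor_iff.mpr ⟨k, ?_⟩, hnot⟩
    conv_lhs => rw [hk]
    apply List.map_congr_left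
    intro i hi
    rw [List.mem_range] at hi
    exact (hω' i hi).symm
  · have hU : {ω' : ℤ → A | ∀ i : ℕ, i < w.length → ω' (k + i) = ω (k + i)} =
        ⋂ i ∈ Finset.range w.length, (fun ω' : ℤ → A => ω' (k + i)) ⁻¹' {ω (k + i)} := by
      ext ω'
      simp [Set.mem_iInter]
    rw [hU]
    apply isOpen_biInter_finset
    intro i _
    exact (continuous_apply (k + (i : ℤ))).isOpen_preimage _ (isOpen_discrete _)
  · intro i _
    rfl

theorem minimal_bg [Fintype A] [TopologicalSpace A] [DiscreteTopology A] (S : A → List A)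
    (hS : IsSubstSystem S) (hmin : Minimal S) :
    ∃ e : A, CondL S e ∧ CondO S e ∧ BddGaps [e] (WS S) := by
  obtain ⟨⟨e, hLe, hOe⟩, hCc⟩ := hS
  refine ⟨e, hLe, hOe, ?_⟩
  by_contra hbg
  rw [BddGaps] at hbg
  push_neg at hbg
  have hfree : ∀ n : ℕ, ∃ θ ∈ OmegaS S, ∀ j : ℤ, |j| ≤ (n : ℤ) → θ j ≠ e := by
    intro n
    obtain ⟨w, hwWS, hwlen, hwno⟩ := hbg (2 * n + 1) (by omega)
    have hwe : e ∉ w := fun hmem => hwno (singleton_infix.mpr hmem)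
    have hwWo : w ∈ WOmega S := hCc ▸ hwWS
    obtain ⟨ω, hωΩ, hfac⟩ := hwWo
    obtain ⟨k, hk⟩ := isFactor_iff.mp hfac
    refine ⟨shift (k + n) ω, shift_mem_OmegaS hωΩ _, ?_⟩
    intro j hj
    have hj' := abs_le.mp hj
    have hi0 : (0 : ℤ) ≤ j + n := by omega
    set i : ℕ := (j + n).toNat with hidef
    have hiZ : (i : ℤ) = j + n := Int.toNat_of_nonneg hi0
    have hiv : i < w.length := by omega
    have h1 : w[i]? = some (ω (k + (i : ℤ))) := by
      conv_lhs => rw [hk]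
      rw [List.getElem?_map, List.getElem?_range hiv]
      rfl
    have h2 : ω (k + (i : ℤ)) ∈ w := by
      obtain ⟨hlt, hval⟩ := List.getElem?_eq_some_iff.mp h1
      exact hval ▸ List.getElem_mem hlt
    have h3 : j + (k + (n : ℤ)) = k + (i : ℤ) := by rw [hiZ]; ring
    show ω (j + (k + (n : ℤ))) ≠ e
    rw [h3]
    intro hc
    rw [hc] at h2
    exact hwe h2
  choose θ hθΩ hθ using hfree
  have hcpt : IsCompact (OmegaS S) := (isClosed_OmegaS S).isCompact
  have hmap : Filter.map θ atTop ≤ Filter.principal (OmegaS S) := by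
    rw [Filter.le_principal_iff]
    exact Filter.eventually_map.mpr (Filter.Eventually.of_forall hθΩ)
  obtain ⟨θ', hθ'Ω, hcl⟩ := hcpt.exists_mapClusterPt hmap
  have hθ'free : ∀ j : ℤ, θ' j ≠ e := by
    intro j
    have hopen : IsOpen {ω'' : ℤ → A | ω'' j = θ' j} := by
      have hpre : {ω'' : ℤ → A | ω'' j = θ' j} =
          (fun ω'' : ℤ → A => ω'' j) ⁻¹' {θ' j} := rfl
      rw [hpre]
      exact (continuous_apply j).isOpen_preimage _ (isOpen_discrete _)
    have hU : {ω'' : ℤ → A | ω'' j = θ' j} ∈ 𝓝 θ' := hopen.mem_nhds rfl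
    have hfreq := (mapClusterPt_iff_frequently.mp hcl) _ hU
    obtain ⟨n, hn1, hn2⟩ := (hfreq.and_eventually (eventually_ge_atTop j.natAbs)).exists
    rw [← hn1]
    apply hθ n j
    rw [Int.abs_eq_natAbs]
    exact_mod_cast hn2
  have heWS : [e] ∈ WS S := ⟨e, 0, List.infix_rfl⟩
  have heWo : [e] ∈ WOmega S := hCc ▸ heWS
  obtain ⟨ωe, hωeΩ, hfe⟩ := heWo
  obtain ⟨k, hk⟩ := isFactor_iff.mp hfe
  have hke : ωe (k + ((0 : ℕ) : ℤ)) = e := by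
    have h1 : [e][0]? = some (ωe (k + ((0 : ℕ) : ℤ))) := by
      conv_lhs => rw [hk]
      rw [List.getElem?_map, List.getElem?_range (by norm_num)]
      rfl
    have h2 : [e][0]? = some e := rfl
    exact (Option.some.inj (h1.symm.trans h2))
  have horb := hmin θ' hθ'Ω hωeΩ
  have hclosedF : IsClosed {ω'' : ℤ → A | ω'' (k + ((0 : ℕ) : ℤ)) ≠ e} := by
    have hpre : {ω'' : ℤ → A | ω'' (k + ((0 : ℕ) : ℤ)) ≠ e} =
        (fun ω'' : ℤ → A => ω'' (k + ((0 : ℕ) : ℤ))) ⁻¹' ({e} : Set A)ᶜ := rfl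
    rw [hpre]
    exact ((isOpen_discrete ({e} : Set A)).isClosed_compl).preimage
      (continuous_apply (k + ((0 : ℕ) : ℤ)))
  have hsub : {ω'' : ℤ → A | ∃ k', ω'' = shift k' θ'} ⊆
      {ω'' : ℤ → A | ω'' (k + ((0 : ℕ) : ℤ)) ≠ e} := by
    rintro _ ⟨k', rfl⟩
    exact hθ'free _
  exact (closure_minimal hsub hclosedF) horb hke

/-- For a substitution dynamical system, the following are equivalent:
(i) some letter `e` satisfying (ℓ) and (o) occurs with bounded gaps in `W(S)`;
(ii) minimality; (iii) linear repetitivity. -/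
theorem statement0 {A : Type*} [Fintype A] [TopologicalSpace A] [DiscreteTopology A]
    (S : A → List A) (hS : IsSubstSystem S) :
    List.TFAE [∃ e : A, CondL S e ∧ CondO S e ∧ BddGaps [e] (WS S),
      Minimal S, LinRep S] := by
  tfae_have 1 → 3 := fun ⟨e, hL, hO, hBG⟩ => bg_linrep S e hL hO hBG
  tfae_have 3 → 2 := fun h => linrep_minimal S h
  tfae_have 2 → 1 := fun h => minimal_bg S hS h
  tfae_finish

end SubstLR
end

section
/- Let (Ω(S),T) be a substitution dynamical system satisfying condition (BG) for the letter e∈A. Then for any a∈A the following are equivalent: (i) |S^n(a)|→∞ as n→∞; (ii) e occurs as a factor of S^k(a) for some k∈ℕ. -/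
open List Filter Topology MeasureTheory

namespace SubstLR

variable {A : Type*}

lemma flatMap_sub {A : Type*} (f : A → List A) {w₁ w₂ : List A} (h : w₁ <+ w₂) :
    w₁.flatMap f <+ w₂.flatMap f := by
  induction h with
  | slnil => simp
  | cons a h ih => simp only [List.flatMap_cons]; exact ih.trans (List.sublist_append_right _ _)
  | cons_cons a h ih => simp only [List.flatMap_cons]; exact (List.Sublist.refl _).append ih

lemma iter_sublist {A : Type*} (S : A → List A) {w₁ w₂ : List A} (h : w₁ <+ w₂) (n : ℕ) :
    iter S n w₁ <+ iter S n w₂ := by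
  induction n with
  | zero => simpa [iter] using h
  | succ n ih =>
    simp only [iter, Function.iterate_succ_apply'] at *
    exact flatMap_sub S ih

/-- under (BG) for `e`, for any letter `a`: `|S^n(a)| → ∞` iff `e` occurs in
some `S^k(a)`. -/
theorem statement3 {A : Type*} [Fintype A]
    (S : A → List A) (hS : IsSubstSystem S) (e : A) (hBG : BG S e) (a : A) :
    Tendsto (fun n => (iter S n [a]).length) atTop atTop ↔ ∃ k : ℕ, e ∈ iter S k [a] := by
  obtain ⟨hL, hO, L, hLpos, hBdd⟩ := hBG
  constructor
  · intro h
    obtain ⟨n, hn⟩ := (h.eventually_ge_atTop L).exists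
    refine ⟨n, ?_⟩
    have hmem : iter S n [a] ∈ WS S := ⟨a, n, List.infix_refl _⟩
    have := hBdd _ hmem hn
    exact (List.singleton_sublist.mp this.sublist)
  · rintro ⟨k, hk⟩
    have hsub : ∀ m : ℕ, iter S m [e] <+ iter S (m + k) [a] := by
      intro m
      have h1 : [e] <+ iter S k [a] := List.singleton_sublist.mpr hk
      have := iter_sublist S h1 m
      have heq : iter S m (iter S k [a]) = iter S (m + k) [a] := by
        simp [iter, ← Function.iterate_add_apply]
      rwa [heq] at this
    have htend : Tendsto (fun n => (iter S (n - k) [e]).length) atTop atTop :=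
      hL.comp (tendsto_sub_atTop_nat k)
    refine tendsto_atTop_mono' _ ?_ htend
    filter_upwards [eventually_ge_atTop k] with n hn
    have := (hsub (n - k)).length_le
    rwa [Nat.sub_add_cancel hn] at this

end SubstLR
end
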